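/- Let G be a linear group over a field F (of any characteristic) and A an abelian subgroup central in G. Let π : G → G/[G,G] be the abelianisation map. If A contains no infinite order unipotent element, then the kernel of the restriction of π to A is a torsion group. -/

import Mathlib

open Polynomial Module

-- Aux 1: a matrix over an algebraically closed field whose spectrum is contained in {0}
-- satisfies M ^ d = 0.
lemma aux_nilpotent_of_spectrum_subset {K : Type*} [Field K] [IsAlgClosed K] {d : ℕ}
    (M : Matrix (Fin d) (Fin d) K) (h : spectrum K M ⊆ {0}) : M ^ d = 0 := by
  let g : Module.End K (Fin d → K) := Matrix.toLinAlgEquiv' M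
  have hspec : spectrum K g = spectrum K M := AlgEquiv.spectrum_eq Matrix.toLinAlgEquiv' M
  have hq : minpoly K g = X ^ (minpoly K g).roots.card := by
    have hmon : (minpoly K g).Monic := minpoly.monic (Algebra.IsIntegral.isIntegral g)
    have hsplit : (minpoly K g).Splits := IsAlgClosed.splits _
    have hroots : ∀ r ∈ (minpoly K g).roots, r = 0 := by
      intro r hr
      have : g.HasEigenvalue r := by
        rw [Module.End.hasEigenvalue_iff_isRoot]
        exact isRoot_of_mem_roots hr
      have : r ∈ spectrum K g := this.mem_spectrum
      rw [hspec] at this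
      exact h this
    have hmc : (minpoly K g).roots.map (fun a => X - C a)
        = (minpoly K g).roots.map (fun _ => (X : K[X])) :=
      Multiset.map_congr rfl (fun r hr => by rw [hroots r hr, map_zero, sub_zero])
    conv_lhs => rw [hsplit.eq_prod_roots_of_monic hmon]
    rw [hmc, Multiset.map_const', Multiset.prod_replicate]
  have hnil : IsNilpotent g := by
    refine ⟨(minpoly K g).roots.card, ?_⟩
    have := minpoly.aeval K g
    rwa [hq, map_pow, aeval_X] at this
  have hchar : g ^ d = 0 := by
    have h1 := hnil.charpoly_eq_X_pow_finrank
    have h2 := LinearMap.aeval_self_charpoly g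
    rw [h1, map_pow, aeval_X, finrank_pi, Fintype.card_fin] at h2
    exact h2
  have : Matrix.toLinAlgEquiv' (M ^ d) = 0 := by rw [map_pow]; exact hchar
  simpa using (map_eq_zero_iff _ (AlgEquiv.injective _)).mp this


lemma aux2 {F K : Type*} [Field F] [Field K] [Algebra F K] {d : ℕ}
    (G : Subgroup (GL (Fin d) F)) (a : G)
    (hcomm : ∀ g : G, ((a : GL (Fin d) F) : Matrix (Fin d) (Fin d) F) *
      ((g : GL (Fin d) F) : Matrix (Fin d) (Fin d) F) =
      ((g : GL (Fin d) F) : Matrix (Fin d) (Fin d) F) *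
      ((a : GL (Fin d) F) : Matrix (Fin d) (Fin d) F))
    (hab : Abelianization.of a = (1 : Abelianization G))
    {μ : K} (hμ : μ ∈ spectrum K
      (((a : GL (Fin d) F) : Matrix (Fin d) (Fin d) F).map (algebraMap F K))) :
    μ ^ d.factorial = 1 := by
  classical
  let ρ : Matrix (Fin d) (Fin d) F →+* Matrix (Fin d) (Fin d) K :=
    (algebraMap F K).mapMatrix
  let τ : G → Module.End K (Fin d → K) := fun g =>
    Matrix.toLinAlgEquiv' (ρ ((g : GL (Fin d) F) : Matrix (Fin d) (Fin d) F))
  have hτmul : ∀ g h : G, τ (g * h) = τ g * τ h := by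
    intro g h
    show Matrix.toLinAlgEquiv' (ρ (((g : GL (Fin d) F) : Matrix (Fin d) (Fin d) F) *
      ((h : GL (Fin d) F) : Matrix (Fin d) (Fin d) F))) = _
    rw [map_mul, map_mul]
  have hτone : τ 1 = 1 := by
    show Matrix.toLinAlgEquiv' (ρ (1 : Matrix (Fin d) (Fin d) F)) = 1
    rw [map_one, map_one]
  let f : Module.End K (Fin d → K) := τ a
  have hE : f.HasEigenvalue μ := by
    rw [Module.End.hasEigenvalue_iff_mem_spectrum]
    rwa [AlgEquiv.spectrum_eq Matrix.toLinAlgEquiv']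
  let E : Submodule K (Fin d → K) := f.eigenspace μ
  have hinv : ∀ g : G, Set.MapsTo (τ g) E E := by
    intro g x hx
    have hcm : f * τ g = τ g * f := by
      show Matrix.toLinAlgEquiv' _ * Matrix.toLinAlgEquiv' _ = _
      rw [← map_mul, ← map_mul, ← map_mul, ← map_mul, hcomm g]
    rw [SetLike.mem_coe, Module.End.mem_eigenspace_iff] at hx ⊢
    have h2 : (f * τ g) x = (τ g * f) x := by rw [hcm]
    rw [Module.End.mul_apply, Module.End.mul_apply, hx, map_smul] at h2
    exact h2
  let r : G → Module.End K E := fun g => (τ g).restrict (hinv g)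
  have hr_mul : ∀ g h : G, r (g * h) = r g * r h := by
    intro g h
    refine LinearMap.ext fun x => Subtype.ext ?_
    simp only [r, Module.End.mul_apply, LinearMap.restrict_coe_apply]
    exact LinearMap.congr_fun (hτmul g h) x.1
  have hr_one : r 1 = 1 := by
    refine LinearMap.ext fun x => Subtype.ext ?_
    simp only [r, LinearMap.restrict_coe_apply, hτone]
    rfl
  -- the unit-valued homomorphism
  let u : G →* (Module.End K E)ˣ :=
    { toFun := fun g => ⟨r g, r g⁻¹,
        by rw [← hr_mul, mul_inv_cancel, hr_one],
        by rw [← hr_mul, inv_mul_cancel, hr_one]⟩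
      map_one' := Units.ext hr_one
      map_mul' := fun g h => Units.ext (hr_mul g h) }
  let φ : G →* Kˣ := (Units.map (LinearMap.det : (Module.End K E) →* K)).comp u
  have hφa : φ a = 1 := by
    have h1 : (Abelianization.lift φ) (Abelianization.of a) = φ a :=
      Abelianization.lift_apply_of φ a
    rw [hab, map_one] at h1
    exact h1.symm
  have hra : r a = μ • (1 : Module.End K E) := by
    refine LinearMap.ext fun x => Subtype.ext ?_
    simp only [r, LinearMap.restrict_coe_apply, LinearMap.smul_apply,
      Module.End.one_apply, SetLike.val_smul]
    exact Module.End.mem_eigenspace_iff.mp x.2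
  have hdet : LinearMap.det (r a) = μ ^ finrank K E := by
    rw [hra, LinearMap.det_smul, map_one, mul_one]
  have hdet1 : LinearMap.det (r a) = 1 := by
    have := congrArg (fun x : Kˣ => (x : K)) hφa
    simpa [φ, u] using this
  have hμm : μ ^ finrank K E = 1 := by rw [← hdet, hdet1]
  have hm1 : 0 < finrank K E := by
    have hne : E ≠ ⊥ := hE
    have : Nontrivial E := Submodule.nontrivial_iff_ne_bot.mpr hne
    exact finrank_pos
  have hm2 : finrank K E ≤ d := by
    have h3 := E.finrank_le
    rwa [finrank_pi, Fintype.card_fin] at h3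
  have hdvd : finrank K E ∣ d.factorial := Nat.dvd_factorial hm1 hm2
  calc μ ^ d.factorial = (μ ^ finrank K E) ^ (d.factorial / finrank K E) := by
        rw [← pow_mul, Nat.mul_div_cancel' hdvd]
    _ = 1 := by rw [hμm, one_pow]


/-- Let `G` be a linear group and `A` an abelian subgroup central in `G`.
If every unipotent element of `A` has finite order, then the kernel of the
restriction to `A` of the abelianisation map of `G` is a torsion group.
(Here an element of `GL(d, F)` is unipotent iff `(M - 1) ^ d = 0`, i.e. all
eigenvalues over the algebraic closure equal `1`.) -/
theorem abelianization_kernel_on_central_abelian_is_torsion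
    {F : Type*} [Field F] {d : ℕ}
    (G A : Subgroup (GL (Fin d) F)) (hAG : A ≤ G)
    (hcent : ∀ a ∈ A, ∀ g ∈ G, a * g = g * a)
    (hunip : ∀ a ∈ A, ((a : Matrix (Fin d) (Fin d) F) - 1) ^ d = 0 →
      IsOfFinOrder a) :
    ∀ a : G, (a : GL (Fin d) F) ∈ A →
      Abelianization.of a = (1 : Abelianization G) → IsOfFinOrder a := by
  intro a haA hab
  classical
  set K := AlgebraicClosure F with hK
  set n := d.factorial with hn
  have hn0 : n ≠ 0 := Nat.factorial_ne_zero d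
  set aM : Matrix (Fin d) (Fin d) F := ((a : GL (Fin d) F) : Matrix (Fin d) (Fin d) F) with haM
  set M : Matrix (Fin d) (Fin d) K := aM.map (algebraMap F K) with hM
  -- every eigenvalue of `M` is a root of unity of order dividing `n = d!`
  have hspec : ∀ μ ∈ spectrum K M, μ ^ n = 1 := by
    intro μ hμ
    refine aux2 G a (fun g => ?_) hab hμ
    simpa using congrArg Units.val (hcent _ haA _ g.2)
  -- hence `M ^ n - 1` has spectrum contained in `{0}`
  have hsub : spectrum K (M ^ n - 1) ⊆ {0} := by
    have hdeg : 0 < (Polynomial.X ^ n - Polynomial.C (1 : K)).degree := by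
      rw [Polynomial.degree_X_pow_sub_C (Nat.pos_of_ne_zero hn0)]
      exact_mod_cast Nat.pos_of_ne_zero hn0
    have heval : (Polynomial.aeval M) (Polynomial.X ^ n - Polynomial.C (1 : K))
        = M ^ n - 1 := by
      rw [map_sub, map_pow, Polynomial.aeval_X, Polynomial.aeval_C, map_one]
    have hsp := spectrum.map_polynomial_aeval_of_degree_pos M
      (Polynomial.X ^ n - Polynomial.C (1 : K)) hdeg
    rw [heval] at hsp
    rw [hsp]
    rintro z ⟨μ, hμ, rfl⟩
    simp only [Polynomial.eval_sub, Polynomial.eval_pow, Polynomial.eval_X,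
      Polynomial.eval_C, Set.mem_singleton_iff]
    rw [hspec μ hμ, sub_self]
  -- so `(M ^ n - 1) ^ d = 0`
  have hnil : (M ^ n - 1) ^ d = 0 := aux_nilpotent_of_spectrum_subset _ hsub
  -- transfer back over `F`
  have hF : (aM ^ n - 1) ^ d = 0 := by
    let ρ : Matrix (Fin d) (Fin d) F →+* Matrix (Fin d) (Fin d) K :=
      (algebraMap F K).mapMatrix
    have hρ : ρ ((aM ^ n - 1) ^ d) = (M ^ n - 1) ^ d := by
      rw [map_pow, map_sub, map_pow, map_one]
      rfl
    have h0 : ρ ((aM ^ n - 1) ^ d) = 0 := by rw [hρ, hnil]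
    ext i j
    have := congrFun (congrFun (congrArg Matrix.of.symm h0) i) j
    simpa [ρ, Matrix.map_apply] using
      (map_eq_zero_iff (algebraMap F K) (algebraMap F K).injective).mp (by
        have h1 := congrArg (fun m : Matrix (Fin d) (Fin d) K => m i j) h0
        simpa [ρ, Matrix.map_apply] using h1)
  -- apply the unipotence hypothesis to `a ^ n`
  have hu : IsOfFinOrder ((a : GL (Fin d) F) ^ n) := by
    refine hunip _ (pow_mem haA n) ?_
    have : (((a : GL (Fin d) F) ^ n : GL (Fin d) F) : Matrix (Fin d) (Fin d) F)
        = aM ^ n := Units.val_pow_eq_pow_val _ n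
    rw [this]
    exact hF
  have h2 : IsOfFinOrder (a : GL (Fin d) F) := hu.of_pow hn0
  obtain ⟨k, hk, hk1⟩ := isOfFinOrder_iff_pow_eq_one.mp h2
  refine isOfFinOrder_iff_pow_eq_one.mpr ⟨k, hk, ?_⟩
  exact Subtype.ext (by rw [SubmonoidClass.coe_pow, hk1]; rfl)
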